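/- For any path-connected space X, cat(X) ≤ TC(X) ≤ cat(X × X). -/

import Mathlib

open unitInterval

/-- A continuous local motion-planning section over `U ⊆ X × X`. -/
def IsMotionSection {X : Type*} [TopologicalSpace X] (U : Set (X × X)) : Prop :=
  ∃ s : C(U, C(I, X)), ∀ p : U, s p 0 = (p : X × X).1 ∧ s p 1 = (p : X × X).2

/-- `X × X` can be covered by `k` open sets, each admitting a continuous local section. -/
def HasTCCover (X : Type*) [TopologicalSpace X] (k : ℕ) : Prop :=
  ∃ U : Fin k → Set (X × X), (∀ i, IsOpen (U i)) ∧ (⋃ i, U i) = Set.univ ∧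
    ∀ i, IsMotionSection (U i)

/-- Farber's topological complexity (unreduced; `⊤` if no finite cover works). -/
noncomputable def topologicalComplexity (X : Type*) [TopologicalSpace X] : ℕ∞ :=
  sInf ((↑) '' {k : ℕ | 1 ≤ k ∧ HasTCCover X k})

/-- `X` can be covered by `k` open sets, each null-homotopic in `X`. -/
def HasCatCover (X : Type*) [TopologicalSpace X] (k : ℕ) : Prop :=
  ∃ U : Fin k → Set X, (∀ i, IsOpen (U i)) ∧ (⋃ i, U i) = Set.univ ∧
    ∀ i, ∃ x₀ : X, ContinuousMap.Homotopic
      ⟨Subtype.val, continuous_subtype_val⟩ (ContinuousMap.const (U i) x₀)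

/-- The (unreduced) Lusternik–Schnirelmann category. -/
noncomputable def lsCat (X : Type*) [TopologicalSpace X] : ℕ∞ :=
  sInf ((↑) '' {k : ℕ | 1 ≤ k ∧ HasCatCover X k})

/-- A TC cover of `X × X` yields a categorical (null-homotopic) cover of `X`. -/
lemma tc_to_cat_aux {X : Type*} [TopologicalSpace X] [PathConnectedSpace X] {k : ℕ}
    (h : HasTCCover X k) : HasCatCover X k := by
  obtain ⟨U, hopen, hcov, hsec⟩ := h
  obtain ⟨x₀⟩ := (inferInstance : Nonempty X)
  refine ⟨fun i => (fun x => ((x₀, x) : X × X)) ⁻¹' U i,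
    fun i => (hopen i).preimage (by continuity), ?_, ?_⟩
  · ext x
    simp only [Set.mem_iUnion, Set.mem_preimage, Set.mem_univ, iff_true]
    have : (x₀, x) ∈ ⋃ i, U i := by rw [hcov]; trivial
    simpa using this
  · intro i
    obtain ⟨s, hs⟩ := hsec i
    refine ⟨x₀, (ContinuousMap.Homotopic.symm ⟨?_⟩)⟩
    set V := (fun x => ((x₀, x) : X × X)) ⁻¹' U i with hV
    have he : Continuous (fun x : V => (⟨(x₀, x.1), x.2⟩ : U i)) :=
      Continuous.subtype_mk (continuous_const.prodMk continuous_subtype_val) _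
    let e : C(V, U i) := ⟨_, he⟩
    let G : C(V × I, X) := (s.comp e).uncurry
    refine ⟨⟨fun q => G (q.2, q.1), ?_⟩, ?_, ?_⟩
    · exact G.continuous.comp continuous_swap
    · intro x
      exact (hs (e x)).1
    · intro x
      exact (hs (e x)).2

/-- A categorical cover of `X × X` yields a TC cover of `X`. -/
lemma cat_to_tc_aux {X : Type*} [TopologicalSpace X] [PathConnectedSpace X] {k : ℕ}
    (h : HasCatCover (X × X) k) : HasTCCover X k := by
  obtain ⟨W, hopen, hcov, hnull⟩ := h
  refine ⟨W, hopen, hcov, fun i => ?_⟩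
  obtain ⟨c, ⟨F⟩⟩ := hnull i
  let γfix : Path c.1 c.2 := (PathConnectedSpace.joined c.1 c.2).somePath
  let γ₁ : ∀ p : W i, Path ((p : X × X)).1 c.1 := fun p =>
    { toFun := fun t => (F (t, p)).1
      continuous_toFun := by fun_prop
      source' := by simp
      target' := by simp }
  let γ₂ : ∀ p : W i, Path ((p : X × X)).2 c.2 := fun p =>
    { toFun := fun t => (F (t, p)).2
      continuous_toFun := by fun_prop
      source' := by simp
      target' := by simp }
  let δ : ∀ p : W i, Path ((p : X × X)).1 ((p : X × X)).2 := fun p =>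
    (γ₁ p).trans (γfix.trans (γ₂ p).symm)
  have hγ₁ : Continuous ↿γ₁ := by
    have : Continuous fun q : W i × I => (F (q.2, q.1)).1 := by fun_prop
    exact this
  have hγ₂ : Continuous ↿fun p => (γ₂ p).symm := by
    apply Path.symm_continuous_family
    have : Continuous fun q : W i × I => (F (q.2, q.1)).2 := by fun_prop
    exact this
  have hmid : Continuous ↿fun p : W i => γfix.trans (γ₂ p).symm := by
    apply Path.trans_continuous_family
    · exact (γfix.continuous).comp continuous_snd
    · exact hγ₂
  have hδ : Continuous ↿δ :=
    Path.trans_continuous_family _ hγ₁ _ hmid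
  let s : C(W i, C(I, X)) := ContinuousMap.curry ⟨fun q : W i × I => δ q.1 q.2, hδ⟩
  exact ⟨s, fun p => ⟨(δ p).source, (δ p).target⟩⟩

/-- For a path-connected space, `cat(X) ≤ TC(X) ≤ cat(X × X)`. -/
theorem cat_le_tc_le_cat_prod {X : Type*} [TopologicalSpace X] [PathConnectedSpace X] :
    lsCat X ≤ topologicalComplexity X ∧ topologicalComplexity X ≤ lsCat (X × X) := by
  constructor
  · exact sInf_le_sInf (Set.image_mono (fun k hk => ⟨hk.1, tc_to_cat_aux hk.2⟩))
  · exact sInf_le_sInf (Set.image_mono (fun k hk => ⟨hk.1, cat_to_tc_aux hk.2⟩))
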